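/- arXiv:2502.13050 — 3 statements merged into one kernel-verified Lean document; each statement's English description precedes it below -/
import Mathlib

section
/- Let n ≥ 2. Fix the standard orthogonal complex structure J₀ on ℝ^{2n} (J₀e_{2k-1} = e_{2k}, J₀e_{2k} = -e_{2k-1}), a base point a₀ ∈ S^{2n-1}, and set x₀ = (a₀, -J₀a₀) ∈ Q̃_n. Let σ : S^{2n-1} → Q̃_n be the section σ(a) = (a, -J₀a) and let ι : S(a₀^⊥) → Q̃_n be the fibre inclusion ι(b) = (a₀, b), where S(a₀^⊥) = {b ∈ ℝ^{2n} : ‖b‖ = 1, ⟨a₀,b⟩ = 0} is a (2n-2)-sphere. Then the map π_{2n-1}(S^{2n-1}, a₀) × π_{2n-1}(S(a₀^⊥), -J₀a₀) → π_{2n-1}(Q̃_n, x₀) given by (α, β) ↦ σ_*(α) + ι_*(β) is a group isomorphism. -/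
open scoped Topology RealInnerProductSpace

noncomputable section

/-- The standard orthogonal complex structure on `ℝ^{2n}`:
`J₀ e_{2k-1} = e_{2k}`, `J₀ e_{2k} = -e_{2k-1}` (in 1-indexed notation). -/
def J0 {n : ℕ} (v : EuclideanSpace ℝ (Fin (2 * n))) : EuclideanSpace ℝ (Fin (2 * n)) := WithLp.toLp 2 fun i =>
  if _h : (i : ℕ) % 2 = 0 then -(v ⟨(i : ℕ) + 1, by have := i.isLt; omega⟩)
  else v ⟨(i : ℕ) - 1, by have := i.isLt; omega⟩

def permJfun (n : ℕ) (i : Fin (2 * n)) : Fin (2 * n) :=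
  if _h : (i : ℕ) % 2 = 0 then ⟨(i : ℕ) + 1, by have := i.isLt; omega⟩
  else ⟨(i : ℕ) - 1, by have := i.isLt; omega⟩

lemma permJfun_even {n : ℕ} {i : Fin (2 * n)} (h : (i : ℕ) % 2 = 0) :
    permJfun n i = ⟨(i : ℕ) + 1, by have := i.isLt; omega⟩ := by
  simp only [permJfun]; rw [dif_pos h]

lemma permJfun_odd {n : ℕ} {i : Fin (2 * n)} (h : ¬(i : ℕ) % 2 = 0) :
    permJfun n i = ⟨(i : ℕ) - 1, by have := i.isLt; omega⟩ := by
  simp only [permJfun]; rw [dif_neg h]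

lemma J0_even {n : ℕ} (v : EuclideanSpace ℝ (Fin (2 * n))) {i : Fin (2 * n)}
    (h : (i : ℕ) % 2 = 0) :
    J0 v i = -(v ⟨(i : ℕ) + 1, by have := i.isLt; omega⟩) := by
  simp only [J0, PiLp.toLp_apply]; rw [dif_pos h]

lemma J0_odd {n : ℕ} (v : EuclideanSpace ℝ (Fin (2 * n))) {i : Fin (2 * n)}
    (h : ¬(i : ℕ) % 2 = 0) :
    J0 v i = v ⟨(i : ℕ) - 1, by have := i.isLt; omega⟩ := by
  simp only [J0, PiLp.toLp_apply]; rw [dif_neg h]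

lemma permJfun_involutive (n : ℕ) : Function.Involutive (permJfun n) := by
  intro i
  by_cases h : (i : ℕ) % 2 = 0
  · rw [permJfun_even h, permJfun_odd (show ¬((i : ℕ) + 1) % 2 = 0 by omega)]
    ext; simp
  · rw [permJfun_odd h, permJfun_even (show ((i : ℕ) - 1) % 2 = 0 by omega)]
    ext; simp; omega

lemma J0_continuous {n : ℕ} : Continuous (J0 (n := n)) := by
  refine continuous_induced_rng.2 ?_
  apply continuous_pi
  intro i
  by_cases h : (i : ℕ) % 2 = 0
  · simp only [Function.comp_apply, J0, WithLp.ofLp_toLp, dif_pos h]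
    exact (PiLp.continuous_apply ..).neg
  · simp only [Function.comp_apply, J0, WithLp.ofLp_toLp, dif_neg h]
    exact PiLp.continuous_apply ..

lemma J0_norm {n : ℕ} (v : EuclideanSpace ℝ (Fin (2 * n))) : ‖J0 v‖ = ‖v‖ := by
  rw [EuclideanSpace.norm_eq, EuclideanSpace.norm_eq]
  congr 1
  refine Fintype.sum_equiv ((permJfun_involutive n).toPerm) _ _ ?_
  intro i
  simp only [Function.Involutive.coe_toPerm]
  by_cases h : (i : ℕ) % 2 = 0
  · rw [J0_even v h, permJfun_even h]; simp
  · rw [J0_odd v h, permJfun_odd h]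

lemma J0_inner {n : ℕ} (v : EuclideanSpace ℝ (Fin (2 * n))) : ⟪v, J0 v⟫ = 0 := by
  rw [PiLp.inner_apply]
  refine Finset.sum_ninvolution (permJfun n) ?_ ?_ (fun a => Finset.mem_univ _)
    (permJfun_involutive n)
  · intro i
    by_cases h : (i : ℕ) % 2 = 0
    · rw [permJfun_even h, J0_even v h,
        J0_odd v (i := ⟨(i : ℕ) + 1, by have := i.isLt; omega⟩)
          (show ¬((i : ℕ) + 1) % 2 = 0 by omega)]
      have e1 : (⟨(i : ℕ) + 1 - 1, by have := i.isLt; omega⟩ : Fin (2 * n)) = i := by ext; simp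
      rw [e1]
      simp only [RCLike.inner_apply, conj_trivial]
      ring
    · rw [permJfun_odd h, J0_odd v h,
        J0_even v (i := ⟨(i : ℕ) - 1, by have := i.isLt; omega⟩)
          (show ((i : ℕ) - 1) % 2 = 0 by omega)]
      have e1 : (⟨(i : ℕ) - 1 + 1, by have := i.isLt; omega⟩ : Fin (2 * n)) = i := by
        ext; simp; omega
      rw [e1]
      simp only [RCLike.inner_apply, conj_trivial]
      ring
  · intro i _
    by_cases h : (i : ℕ) % 2 = 0
    · rw [permJfun_even h]
      intro he
      have := congrArg Fin.val he
      simp at this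
    · rw [permJfun_odd h]
      intro he
      have := congrArg Fin.val he
      simp at this
      omega

/-- The Stiefel manifold `Q̃_n` of orthonormal 2-frames in `ℝ^{2n}` (equivalently, unit-norm
isotropic vectors `a + ib` for the complexified standard quadratic form on `ℂ^{2n}`),
with the subspace topology. -/
def QTilde (n : ℕ) : Type :=
  {p : EuclideanSpace ℝ (Fin (2 * n)) × EuclideanSpace ℝ (Fin (2 * n)) //
    ‖p.1‖ = 1 ∧ ‖p.2‖ = 1 ∧ ⟪p.1, p.2⟫ = 0}

instance (n : ℕ) : TopologicalSpace (QTilde n) :=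
  inferInstanceAs (TopologicalSpace
    {p : EuclideanSpace ℝ (Fin (2 * n)) × EuclideanSpace ℝ (Fin (2 * n)) //
      ‖p.1‖ = 1 ∧ ‖p.2‖ = 1 ∧ ⟪p.1, p.2⟫ = 0})

/-- The section `σ : S^{2n-1} → Q̃_n`, `a ↦ (a, -J₀a)`, of the unit tangent bundle of the
sphere. -/
def sectionC (n : ℕ) : C(Metric.sphere (0 : EuclideanSpace ℝ (Fin (2 * n))) 1, QTilde n) where
  toFun a := ⟨((a : EuclideanSpace ℝ (Fin (2 * n))), -J0 (a : EuclideanSpace ℝ (Fin (2 * n)))),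
    by
      have ha : ‖(a : EuclideanSpace ℝ (Fin (2 * n)))‖ = 1 := by
        simpa using mem_sphere_zero_iff_norm.mp a.2
      exact ⟨ha, by rw [norm_neg, J0_norm, ha], by rw [inner_neg_right, J0_inner, neg_zero]⟩⟩
  continuous_toFun := by
    apply Continuous.subtype_mk
    exact continuous_subtype_val.prodMk (J0_continuous.comp continuous_subtype_val).neg

/-- The fibre `S(a₀^⊥)` of the unit tangent bundle of `S^{2n-1}` over `a₀`: the sphere of unit
vectors orthogonal to `a₀`. -/
def Fib {n : ℕ} (a₀ : Metric.sphere (0 : EuclideanSpace ℝ (Fin (2 * n))) 1) : Type :=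
  {b : EuclideanSpace ℝ (Fin (2 * n)) //
    ‖b‖ = 1 ∧ ⟪(a₀ : EuclideanSpace ℝ (Fin (2 * n))), b⟫ = 0}

instance {n : ℕ} (a₀ : Metric.sphere (0 : EuclideanSpace ℝ (Fin (2 * n))) 1) :
    TopologicalSpace (Fib a₀) :=
  inferInstanceAs (TopologicalSpace
    {b : EuclideanSpace ℝ (Fin (2 * n)) //
      ‖b‖ = 1 ∧ ⟪(a₀ : EuclideanSpace ℝ (Fin (2 * n))), b⟫ = 0})

/-- The base point `-J₀a₀` of the fibre `S(a₀^⊥)`. -/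
def fibBase {n : ℕ} (a₀ : Metric.sphere (0 : EuclideanSpace ℝ (Fin (2 * n))) 1) : Fib a₀ :=
  ⟨-J0 (a₀ : EuclideanSpace ℝ (Fin (2 * n))), by
    have ha : ‖(a₀ : EuclideanSpace ℝ (Fin (2 * n)))‖ = 1 := by
      simpa using mem_sphere_zero_iff_norm.mp a₀.2
    exact ⟨by rw [norm_neg, J0_norm, ha], by rw [inner_neg_right, J0_inner, neg_zero]⟩⟩

/-- The fibre inclusion `ι : S(a₀^⊥) → Q̃_n`, `b ↦ (a₀, b)`. -/
def fibC {n : ℕ} (a₀ : Metric.sphere (0 : EuclideanSpace ℝ (Fin (2 * n))) 1) :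
    C(Fib a₀, QTilde n) where
  toFun b := ⟨((a₀ : EuclideanSpace ℝ (Fin (2 * n))), b.val),
    ⟨by simpa using mem_sphere_zero_iff_norm.mp a₀.2, b.2.1, b.2.2⟩⟩
  continuous_toFun := by
    apply Continuous.subtype_mk
    exact continuous_const.prodMk continuous_subtype_val

lemma fibC_base {n : ℕ} (a₀ : Metric.sphere (0 : EuclideanSpace ℝ (Fin (2 * n))) 1) :
    fibC a₀ (fibBase a₀) = sectionC n a₀ := rfl

/-- The map induced on homotopy groups (classes of generalized loops) by a pointed continuous
map. -/
def piMap {X Y : Type*} [TopologicalSpace X] [TopologicalSpace Y]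
    (N : Type*) {x : X} {y : Y} (f : C(X, Y)) (hf : f x = y) :
    HomotopyGroup N X x → HomotopyGroup N Y y :=
  Quotient.map
    (fun p => ⟨f.comp p.1, fun t ht => by
      simp only [ContinuousMap.comp_apply, p.2 t ht, hf]⟩)
    (fun p q h => h.map fun H => H.compContinuousMap f)

/-- The map `(α, β) ↦ σ_*(α) + ι_*(β)` from
`π_{2n-1}(S^{2n-1}, a₀) × π_{2n-1}(S(a₀^⊥), -J₀a₀)` to `π_{2n-1}(Q̃_n, (a₀, -J₀a₀))`. -/
def combinedMap (n m : ℕ) (a₀ : Metric.sphere (0 : EuclideanSpace ℝ (Fin (2 * n))) 1) :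
    (π_ (2 * m + 3) (Metric.sphere (0 : EuclideanSpace ℝ (Fin (2 * n))) 1) a₀ ×
      π_ (2 * m + 3) (Fib a₀) (fibBase a₀)) →
      π_ (2 * m + 3) (QTilde n) (sectionC n a₀) :=
  fun αβ =>
    piMap (Fin (2 * m + 3)) (sectionC n) rfl αβ.1 *
      piMap (Fin (2 * m + 3)) (fibC a₀) (fibC_base a₀) αβ.2

/-! ### Auxiliary machinery for the proof -/

open scoped unitInterval
open Topology.Homotopy

/-- `Quotient.mk` with the `HomotopyGroup` type ascription. -/
def hmk {N X : Type*} [TopologicalSpace X] {x : X} (p : GenLoop N X x) :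
    HomotopyGroup N X x := ⟦p⟧

lemma hmk_sound {N X : Type*} [TopologicalSpace X] {x : X} {p q : GenLoop N X x}
    (h : GenLoop.Homotopic p q) : hmk p = hmk q := Quotient.sound h

section PiMapAlgebra

variable {X Y W : Type*} [TopologicalSpace X] [TopologicalSpace Y] [TopologicalSpace W]
  {x : X} {y : Y} {w : W} {N : Type*}

/-- The underlying map of `GenLoop`s inducing `piMap`. -/
def gmap (f : C(X, Y)) (hf : f x = y) (p : Ω^ N X x) : Ω^ N Y y :=
  ⟨f.comp p.1, fun t ht => by rw [ContinuousMap.comp_apply, p.2 t ht, hf]⟩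

lemma gmap_apply (f : C(X, Y)) (hf : f x = y) (p : Ω^ N X x) (t : I^N) :
    gmap f hf p t = f (p t) := rfl

lemma piMap_mk (f : C(X, Y)) (hf : f x = y) (p : Ω^ N X x) :
    piMap N f hf (hmk p) = hmk (gmap f hf p) := rfl

lemma gmap_transAt [DecidableEq N] (i : N) (f : C(X, Y)) (hf : f x = y) (a c : Ω^ N X x) :
    gmap f hf (GenLoop.transAt i a c) =
      GenLoop.transAt i (gmap f hf a) (gmap f hf c) := by
  ext t
  show f ((GenLoop.transAt i a c) t) = (GenLoop.transAt i _ _) t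
  simp only [GenLoop.transAt, GenLoop.coe_copy]
  split_ifs <;> rfl

lemma gmap_symmAt [DecidableEq N] (i : N) (f : C(X, Y)) (hf : f x = y) (a : Ω^ N X x) :
    gmap f hf (GenLoop.symmAt i a) = GenLoop.symmAt i (gmap f hf a) := by
  ext t
  show f ((GenLoop.symmAt i a) t) = (GenLoop.symmAt i _) t
  simp only [GenLoop.symmAt, GenLoop.coe_copy]
  rfl

lemma gmap_const (f : C(X, Y)) (hf : f x = y) :
    gmap f hf (GenLoop.const : Ω^ N X x) = GenLoop.const := by
  ext t; exact hf

lemma gmap_gmap (f : C(X, Y)) (hf : f x = y) (g : C(Y, W)) (hg : g y = w)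
    (h' : (g.comp f) x = w) (p : Ω^ N X x) :
    gmap g hg (gmap f hf p) = gmap (g.comp f) h' p := by
  ext t; rfl

variable [DecidableEq N] [Nonempty N]

lemma hmk_mul {p q : Ω^ N X x} :
    hmk p * hmk q = hmk (GenLoop.transAt (Classical.arbitrary N) q p) :=
  HomotopyGroup.mul_spec

lemma hmk_inv {p : Ω^ N X x} :
    (hmk p)⁻¹ = hmk (GenLoop.symmAt (Classical.arbitrary N) p) :=
  HomotopyGroup.inv_spec

lemma hmk_exists (γ : HomotopyGroup N X x) : ∃ p : Ω^ N X x, γ = hmk p := by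
  obtain ⟨p, hp⟩ := Quotient.exists_rep γ
  exact ⟨p, hp.symm⟩

lemma piMap_mul (f : C(X, Y)) (hf : f x = y) (γ δ : HomotopyGroup N X x) :
    piMap N f hf (γ * δ) = piMap N f hf γ * piMap N f hf δ := by
  obtain ⟨p, rfl⟩ := hmk_exists γ
  obtain ⟨q, rfl⟩ := hmk_exists δ
  rw [hmk_mul, piMap_mk, gmap_transAt, piMap_mk, piMap_mk, hmk_mul]

lemma hmk_one : (1 : HomotopyGroup N X x) = hmk GenLoop.const := HomotopyGroup.one_def

lemma piMap_one (f : C(X, Y)) (hf : f x = y) :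
    piMap N f hf (1 : HomotopyGroup N X x) = 1 := by
  rw [hmk_one, hmk_one, piMap_mk, gmap_const]

lemma piMap_inv (f : C(X, Y)) (hf : f x = y) (γ : HomotopyGroup N X x) :
    piMap N f hf γ⁻¹ = (piMap N f hf γ)⁻¹ := by
  obtain ⟨p, rfl⟩ := hmk_exists γ
  rw [hmk_inv, piMap_mk, gmap_symmAt, piMap_mk, hmk_inv]

lemma piMap_piMap (f : C(X, Y)) (hf : f x = y) (g : C(Y, W)) (hg : g y = w)
    (h' : (g.comp f) x = w) (γ : HomotopyGroup N X x) :
    piMap N g hg (piMap N f hf γ) = piMap N (g.comp f) h' γ := by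
  obtain ⟨p, rfl⟩ := hmk_exists γ
  rw [piMap_mk, piMap_mk, piMap_mk, gmap_gmap]

lemma piMap_congr {f g : C(X, Y)} (h : f = g) (hf : f x = y) (hg : g x = y)
    (γ : HomotopyGroup N X x) : piMap N f hf γ = piMap N g hg γ := by
  subst h; rfl

lemma piMap_id (h : ContinuousMap.id X x = x) (γ : HomotopyGroup N X x) :
    piMap N (ContinuousMap.id X) h γ = γ := by
  obtain ⟨p, rfl⟩ := hmk_exists γ
  rw [piMap_mk, show gmap (ContinuousMap.id X) h p = p from by ext t; rfl]

lemma piMap_constmap (h : ContinuousMap.const X y x = y) (γ : HomotopyGroup N X x) :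
    piMap N (ContinuousMap.const X y) h γ = 1 := by
  obtain ⟨p, rfl⟩ := hmk_exists γ
  rw [piMap_mk, hmk_one,
    show gmap (ContinuousMap.const X y) h p = GenLoop.const from by ext t; rfl]

end PiMapAlgebra

section Projection

variable {n : ℕ}

/-- The bundle projection `Q̃_n → S^{2n-1}`. -/
def pC (n : ℕ) : C(QTilde n, Metric.sphere (0 : EuclideanSpace ℝ (Fin (2 * n))) 1) :=
  ⟨fun e => ⟨e.1.1, by rw [mem_sphere_zero_iff_norm]; exact e.2.1⟩,
    by exact (continuous_fst.comp continuous_subtype_val).subtype_mk _⟩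

lemma pC_apply (e : QTilde n) : (pC n e : EuclideanSpace ℝ (Fin (2 * n))) = e.1.1 := rfl

lemma pC_sectionC (a : Metric.sphere (0 : EuclideanSpace ℝ (Fin (2 * n))) 1) :
    pC n (sectionC n a) = a := Subtype.ext rfl

lemma pC_fibC (a₀ : Metric.sphere (0 : EuclideanSpace ℝ (Fin (2 * n))) 1) (b : Fib a₀) :
    pC n (fibC a₀ b) = a₀ := Subtype.ext rfl

lemma pC_comp_sectionC : (pC n).comp (sectionC n) = ContinuousMap.id _ :=
  ContinuousMap.ext fun a => Subtype.ext rfl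

lemma pC_comp_fibC (a₀ : Metric.sphere (0 : EuclideanSpace ℝ (Fin (2 * n))) 1) :
    (pC n).comp (fibC a₀) = ContinuousMap.const _ a₀ :=
  ContinuousMap.ext fun b => Subtype.ext rfl

end Projection

/-- One transport step: orthogonal projection of `b` away from `a`, renormalized. -/
def stepV {E : Type*} [NormedAddCommGroup E] [InnerProductSpace ℝ E] (a b : E) : E :=
  (‖b - ⟪b, a⟫ • a‖)⁻¹ • (b - ⟪b, a⟫ • a)

section StepV

variable {E : Type*} [NormedAddCommGroup E] [InnerProductSpace ℝ E]

lemma stepV_normsq {a b : E} (ha : ‖a‖ = 1) :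
    ‖b - ⟪b, a⟫ • a‖ ^ 2 = ‖b‖ ^ 2 - ⟪b, a⟫ ^ 2 := by
  rw [norm_sub_sq_real, real_inner_smul_right, norm_smul, ha, Real.norm_eq_abs]
  rw [mul_one, sq_abs]
  ring

lemma stepV_ne {a b : E} (ha : ‖a‖ = 1) (hb : ‖b‖ = 1) (hs : |⟪b, a⟫| < 1) :
    b - ⟪b, a⟫ • a ≠ 0 := by
  intro h
  have h2 := stepV_normsq (b := b) ha
  rw [h, hb] at h2
  have h3 : ⟪b, a⟫ ^ 2 < 1 := by
    nlinarith [abs_nonneg (⟪b, a⟫ : ℝ), sq_abs (⟪b, a⟫ : ℝ)]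
  simp only [norm_zero] at h2
  nlinarith

lemma stepV_norm {a b : E} (ha : ‖a‖ = 1) (hb : ‖b‖ = 1) (hs : |⟪b, a⟫| < 1) :
    ‖stepV a b‖ = 1 := by
  have hne := stepV_ne ha hb hs
  rw [stepV, norm_smul, Real.norm_eq_abs, abs_inv, abs_of_nonneg (norm_nonneg _)]
  exact inv_mul_cancel₀ (norm_ne_zero_iff.mpr hne)

lemma stepV_orth (a b : E) (ha : ‖a‖ = 1) :
    ⟪a, stepV a b⟫ = 0 := by
  rw [stepV, real_inner_smul_right, inner_sub_right, real_inner_smul_right,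
    real_inner_self_eq_norm_sq, ha, real_inner_comm]
  ring

lemma stepV_fix {a b : E} (h0 : ⟪b, a⟫ = 0) (hb : ‖b‖ = 1) : stepV a b = b := by
  rw [stepV, h0, zero_smul, sub_zero, hb, inv_one, one_smul]

lemma stepV_continuous {W : Type*} [TopologicalSpace W] {A B : W → E}
    (hA : Continuous A) (hB : Continuous B)
    (hne : ∀ w, B w - ⟪B w, A w⟫ • A w ≠ 0) :
    Continuous fun w => stepV (A w) (B w) := by
  have hin : Continuous fun w => (⟪B w, A w⟫ : ℝ) := hB.inner hA
  have hv : Continuous fun w => B w - ⟪B w, A w⟫ • A w := hB.sub (hin.smul hA)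
  exact (hv.norm.inv₀ fun w => norm_ne_zero_iff.mpr (hne w)).smul hv

end StepV

section HLP

variable {n : ℕ}

/-- Homotopy lifting for the bundle `Q̃_n → S^{2n-1}` with stationarity. -/
lemma hlp {Z : Type} [MetricSpace Z] [CompactSpace Z]
    (G : C(I × Z, Metric.sphere (0 : EuclideanSpace ℝ (Fin (2 * n))) 1))
    (e₀ : C(Z, QTilde n))
    (he : ∀ z, (e₀ z).1.1 = (G (0, z) : EuclideanSpace ℝ (Fin (2 * n)))) :
    ∃ L : C(I × Z, QTilde n),
      (∀ z, L (0, z) = e₀ z) ∧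
      (∀ q : I × Z, (L q).1.1 = (G q : EuclideanSpace ℝ (Fin (2 * n)))) ∧
      (∀ z, (∀ t, G (t, z) = G (0, z)) → ∀ t, L (t, z) = e₀ z) := by
  classical
  have hGnorm : ∀ q : I × Z, ‖(G q : EuclideanSpace ℝ (Fin (2 * n)))‖ = 1 := fun q =>
    mem_sphere_zero_iff_norm.mp (G q).2
  have hGu : UniformContinuous ⇑G := CompactSpace.uniformContinuous_of_continuous G.continuous
  rw [Metric.uniformContinuous_iff] at hGu
  obtain ⟨δ, hδ0, hδ⟩ := hGu (1 / 2) (by norm_num)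
  obtain ⟨Nr, hNr⟩ := exists_nat_gt (1 / δ)
  have hNr0 : 0 < (Nr : ℝ) := lt_trans (by positivity) hNr
  have hstep : 1 / (Nr : ℝ) < δ := by
    rw [div_lt_iff₀ hNr0]
    have := (div_lt_iff₀ hδ0).mp hNr
    linarith
  set u : ℕ → I := fun j => Set.projIcc (0 : ℝ) 1 zero_le_one ((j : ℝ) / (Nr : ℝ)) with hu
  have hu_coe : ∀ j, ((u j : I) : ℝ) = min 1 ((j : ℝ) / Nr) := by
    intro j
    rw [hu]
    simp only [Set.coe_projIcc]
    exact max_eq_right (le_min zero_le_one (by positivity))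
  have hu0 : u 0 = 0 := Subtype.ext (by rw [hu_coe]; norm_num)
  have huN : u Nr = 1 := Subtype.ext (by rw [hu_coe, div_self (ne_of_gt hNr0)]; norm_num)
  have humono : ∀ j, ((u j : I) : ℝ) ≤ ((u (j + 1) : I) : ℝ) := by
    intro j
    rw [hu_coe, hu_coe]
    refine min_le_min le_rfl ?_
    gcongr
    push_cast; linarith
  have hugap : ∀ j, ((u (j + 1) : I) : ℝ) ≤ ((u j : I) : ℝ) + 1 / Nr := by
    intro j
    rw [hu_coe, hu_coe]
    push_cast
    rcases le_total 1 ((j : ℝ) / Nr) with h | h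
    · rw [min_eq_left h]
      have h1 : min (1 : ℝ) (((j : ℝ) + 1) / Nr) ≤ 1 := min_le_left _ _
      have h2 : 0 < 1 / (Nr : ℝ) := by positivity
      linarith
    · rw [min_eq_right h]
      calc min (1 : ℝ) (((j : ℝ) + 1) / Nr) ≤ ((j : ℝ) + 1) / Nr := min_le_right _ _
        _ = (j : ℝ) / Nr + 1 / Nr := by ring
  have hdist : ∀ (s s' : I) (z : Z), |(s : ℝ) - (s' : ℝ)| < δ →
      dist (G (s, z)) (G (s', z)) < 1 / 2 := by
    intro s s' z h
    apply hδ
    rw [Prod.dist_eq]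
    apply max_lt _ (by simpa using hδ0)
    rwa [Subtype.dist_eq, Real.dist_eq]
  have hbound : ∀ (j : ℕ) (s : I) (z : Z) (b : EuclideanSpace ℝ (Fin (2 * n))),
      ‖b‖ = 1 → ⟪((G (u j, z)) : EuclideanSpace ℝ (Fin (2 * n))), b⟫ = 0 →
      ((u j : I) : ℝ) ≤ (s : ℝ) → (s : ℝ) ≤ ((u (j + 1) : I) : ℝ) →
      |⟪b, ((G (s, z)) : EuclideanSpace ℝ (Fin (2 * n)))⟫| < 1 / 2 := by
    intro j s z b hb h0 h1 h2
    have h0' : ⟪b, ((G (u j, z)) : EuclideanSpace ℝ (Fin (2 * n)))⟫ = 0 := by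
      rw [real_inner_comm]; exact h0
    have h3 : ⟪b, ((G (s, z)) : EuclideanSpace ℝ (Fin (2 * n)))⟫ =
        ⟪b, ((G (s, z)) : EuclideanSpace ℝ (Fin (2 * n))) -
          ((G (u j, z)) : EuclideanSpace ℝ (Fin (2 * n)))⟫ := by
      rw [inner_sub_right, h0', sub_zero]
    rw [h3]
    calc |⟪b, _⟫| ≤ ‖b‖ * ‖((G (s, z)) : EuclideanSpace ℝ (Fin (2 * n))) -
          ((G (u j, z)) : EuclideanSpace ℝ (Fin (2 * n)))‖ := abs_real_inner_le_norm _ _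
      _ = dist (G (s, z)) (G (u j, z)) := by
          rw [hb, one_mul, Subtype.dist_eq, dist_eq_norm]
      _ < 1 / 2 := hdist s (u j) z (by
          rw [abs_of_nonneg (by linarith)]
          have := hugap j
          linarith)
  set bz : Z → EuclideanSpace ℝ (Fin (2 * n)) := fun z => (e₀ z).1.2 with hbzdef
  have hbz_norm : ∀ z, ‖bz z‖ = 1 := fun z => (e₀ z).2.2.1
  have hbz_orth : ∀ z, ⟪((G (0, z)) : EuclideanSpace ℝ (Fin (2 * n))), bz z⟫ = 0 := fun z => by
    rw [← he z]; exact (e₀ z).2.2.2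
  have hmj_mem : ∀ (j : ℕ) (t : I), min (t : ℝ) ((u j : I) : ℝ) ∈ Set.Icc (0 : ℝ) 1 :=
    fun j t => ⟨le_min t.2.1 (u j).2.1, (min_le_left _ _).trans t.2.2⟩
  set mj : ℕ → I → I := fun j t => ⟨min (t : ℝ) ((u j : I) : ℝ), hmj_mem j t⟩ with hmjdef
  have main : ∀ j : ℕ, ∃ f : C(I × Z, EuclideanSpace ℝ (Fin (2 * n))),
      (∀ q, ‖f q‖ = 1) ∧
      (∀ t z, ⟪((G (mj j t, z)) : EuclideanSpace ℝ (Fin (2 * n))), f (t, z)⟫ = 0) ∧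
      (∀ t z, f (t, z) = f (mj j t, z)) ∧
      (∀ z, f (0, z) = bz z) ∧
      (∀ z, (∀ t, G (t, z) = G (0, z)) → ∀ t, f (t, z) = bz z) := by
    intro j
    induction j with
    | zero =>
      refine ⟨⟨fun q => bz q.2, ?_⟩, fun q => hbz_norm q.2, fun t z => ?_,
        fun t z => rfl, fun z => rfl, fun z _ t => rfl⟩
      · exact continuous_snd.comp (continuous_subtype_val.comp
          (e₀.continuous.comp continuous_snd)) |>.congr fun q => rfl
      · have e0 : mj 0 t = 0 := Subtype.ext (by
          show min (t : ℝ) _ = _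
          rw [hu0]
          simpa using min_eq_right t.2.1)
        rw [e0]
        exact hbz_orth z
    | succ j ih =>
      obtain ⟨f, hf1, hf2, hf3, hf4, hf5⟩ := ih
      have hcj_mem : ∀ t : I,
          max (min (t : ℝ) ((u (j + 1) : I) : ℝ)) ((u j : I) : ℝ) ∈ Set.Icc (0 : ℝ) 1 :=
        fun t => ⟨(u j).2.1.trans (le_max_right _ _),
          max_le ((min_le_right _ _).trans (u (j + 1)).2.2) (u j).2.2⟩
      set cj : I → I := fun t => ⟨_, hcj_mem t⟩ with hcjdef
      have hcj_cont : Continuous cj :=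
        Continuous.subtype_mk ((continuous_subtype_val.min continuous_const).max
          continuous_const) _
      have horth : ∀ z, ⟪((G (u j, z)) : EuclideanSpace ℝ (Fin (2 * n))), f (u j, z)⟫ = 0 := by
        intro z
        have h := hf2 (u j) z
        rwa [show mj j (u j) = u j from Subtype.ext (min_self _)] at h
      have hrange : ∀ t : I, ((u j : I) : ℝ) ≤ ((cj t : I) : ℝ) ∧
          ((cj t : I) : ℝ) ≤ ((u (j + 1) : I) : ℝ) :=
        fun t => ⟨le_max_right _ _, max_le (min_le_right _ _) (humono j)⟩
      have hsmall : ∀ (t : I) (z : Z),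
          |⟪f (u j, z), ((G (cj t, z)) : EuclideanSpace ℝ (Fin (2 * n)))⟫| < 1 / 2 :=
        fun t z => hbound j (cj t) z (f (u j, z)) (hf1 _) (horth z) (hrange t).1 (hrange t).2
      have hsmall1 : ∀ (t : I) (z : Z),
          |⟪f (u j, z), ((G (cj t, z)) : EuclideanSpace ℝ (Fin (2 * n)))⟫| < 1 :=
        fun t z => lt_trans (hsmall t z) (by norm_num)
      have hAcont : Continuous fun q : I × Z =>
          ((G (cj q.1, q.2)) : EuclideanSpace ℝ (Fin (2 * n))) :=
        continuous_subtype_val.comp (G.continuous.comp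
          ((hcj_cont.comp continuous_fst).prodMk continuous_snd))
      have hBcont : Continuous fun q : I × Z => f (u j, q.2) :=
        f.continuous.comp (continuous_const.prodMk continuous_snd)
      have hne : ∀ q : I × Z, f (u j, q.2) -
          ⟪f (u j, q.2), ((G (cj q.1, q.2)) : EuclideanSpace ℝ (Fin (2 * n)))⟫ •
            ((G (cj q.1, q.2)) : EuclideanSpace ℝ (Fin (2 * n))) ≠ 0 :=
        fun q => stepV_ne (hGnorm _) (hf1 _) (hsmall1 q.1 q.2)
      have hcj_uj : cj (u j) = u j := Subtype.ext (by
        show max (min _ _) _ = _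
        rw [min_eq_left (humono j), max_self])
      have hfix0 : ∀ z, stepV ((G (u j, z)) : EuclideanSpace ℝ (Fin (2 * n))) (f (u j, z))
          = f (u j, z) :=
        fun z => stepV_fix (by rw [real_inner_comm]; exact horth z) (hf1 _)
      have hg_cont : Continuous (fun q : I × Z =>
          if (q.1 : ℝ) ≤ ((u j : I) : ℝ) then f q
          else stepV ((G (cj q.1, q.2)) : EuclideanSpace ℝ (Fin (2 * n))) (f (u j, q.2))) := by
        refine Continuous.if_le f.continuous (stepV_continuous hAcont hBcont hne)
          (continuous_subtype_val.comp continuous_fst) continuous_const ?_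
        intro q hq
        have hq' : q.1 = u j := Subtype.ext hq
        have hqq : q = (u j, q.2) := Prod.ext hq' rfl
        rw [hqq, hcj_uj, hfix0 q.2]
      refine ⟨⟨_, hg_cont⟩, ?_, ?_, ?_, ?_, ?_⟩
      · rintro ⟨t, z⟩
        by_cases h : (t : ℝ) ≤ ((u j : I) : ℝ)
        · simp only [ContinuousMap.coe_mk, if_pos h]
          exact hf1 _
        · simp only [ContinuousMap.coe_mk, if_neg h]
          exact stepV_norm (hGnorm _) (hf1 _) (hsmall1 t z)
      · intro t z
        by_cases h : (t : ℝ) ≤ ((u j : I) : ℝ)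
        · simp only [ContinuousMap.coe_mk, if_pos h]
          have e1 : mj (j + 1) t = t := Subtype.ext (min_eq_left (h.trans (humono j)))
          have e2 : mj j t = t := Subtype.ext (min_eq_left h)
          rw [e1]
          have h2 := hf2 t z
          rwa [e2] at h2
        · simp only [ContinuousMap.coe_mk, if_neg h]
          have e1 : mj (j + 1) t = cj t := Subtype.ext (by
            show min _ _ = max (min _ _) _
            exact (max_eq_left (le_min (le_of_lt (not_le.mp h)) (humono j))).symm)
          rw [e1]
          exact stepV_orth _ _ (hGnorm _)
      · intro t z
        by_cases h : (t : ℝ) ≤ ((u j : I) : ℝ)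
        · have e1 : mj (j + 1) t = t := Subtype.ext (min_eq_left (h.trans (humono j)))
          rw [e1]
        · rcases eq_or_lt_of_le (humono j) with heq | hlt
          · have hmj : ((mj (j + 1) t : I) : ℝ) = ((u j : I) : ℝ) := by
              show min (t : ℝ) _ = _
              rw [← heq]
              exact min_eq_right (le_of_lt (not_le.mp h))
            have hmj' : mj (j + 1) t = u j := Subtype.ext hmj
            have hcjt : cj t = u j := Subtype.ext (by
              show max (min _ _) _ = _
              rw [← heq, min_eq_right (le_of_lt (not_le.mp h))]
              exact max_self _)
            simp only [ContinuousMap.coe_mk, if_neg h, if_pos (le_of_eq hmj)]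
            rw [hcjt, hfix0 z, hmj']
          · have hmjgt : ¬ ((mj (j + 1) t : I) : ℝ) ≤ ((u j : I) : ℝ) := by
              show ¬ min (t : ℝ) _ ≤ _
              push_neg
              exact lt_min (not_le.mp h) hlt
            simp only [ContinuousMap.coe_mk, if_neg h, if_neg hmjgt]
            have e2 : cj (mj (j + 1) t) = cj t := Subtype.ext (by
              show max (min (min (t : ℝ) _) _) _ = max (min _ _) _
              rw [min_assoc, min_self])
            rw [e2]
      · intro z
        have h0 : ((0 : I) : ℝ) ≤ ((u j : I) : ℝ) := by simpa using (u j).2.1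
        simp only [ContinuousMap.coe_mk, if_pos h0]
        exact hf4 z
      · intro z hz t
        by_cases h : (t : ℝ) ≤ ((u j : I) : ℝ)
        · simp only [ContinuousMap.coe_mk, if_pos h]
          exact hf5 z hz t
        · simp only [ContinuousMap.coe_mk, if_neg h]
          rw [hf5 z hz (u j), hz (cj t)]
          exact stepV_fix (by rw [real_inner_comm]; exact hbz_orth z) (hbz_norm z)
  obtain ⟨f, hf1, hf2, hf3, hf4, hf5⟩ := main Nr
  have hmjN : ∀ t : I, mj Nr t = t := fun t => Subtype.ext (by
    show min (t : ℝ) _ = _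
    rw [huN]
    exact min_eq_left (by simpa using t.2.2))
  refine ⟨⟨fun q => ⟨((G q : EuclideanSpace ℝ (Fin (2 * n))), f q), hGnorm q, hf1 q, ?_⟩, ?_⟩,
      ?_, fun q => rfl, ?_⟩
  · have h2 := hf2 q.1 q.2
    rwa [hmjN] at h2
  · exact ((continuous_subtype_val.comp G.continuous).prodMk f.continuous).subtype_mk _
  · intro z
    exact Subtype.ext (Prod.ext (he z).symm (hf4 z))
  · intro z hz t
    refine Subtype.ext (Prod.ext ?_ (hf5 z hz t))
    show (G (t, z) : EuclideanSpace ℝ (Fin (2 * n))) = _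
    rw [hz t, he z]

end HLP

section MainLemmas

variable {n : ℕ} (k : ℕ) (a₀ : Metric.sphere (0 : EuclideanSpace ℝ (Fin (2 * n))) 1)

lemma surj_decomp (γ : π_ (k + 2) (QTilde n) (sectionC n a₀)) :
    ∃ β : π_ (k + 2) (Fib a₀) (fibBase a₀),
      γ = piMap (Fin (k + 2)) (sectionC n) rfl
            (piMap (Fin (k + 2)) (pC n) (pC_sectionC a₀) γ) *
          piMap (Fin (k + 2)) (fibC a₀) (fibC_base a₀) β := by
  classical
  set α := piMap (Fin (k + 2)) (pC n) (pC_sectionC a₀) γ with hα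
  set γ'' := γ * (piMap (Fin (k + 2)) (sectionC n) rfl α)⁻¹ with hγ''
  obtain ⟨e, he⟩ := hmk_exists γ''
  have hpγ : piMap (Fin (k + 2)) (pC n) (pC_sectionC a₀) γ'' = 1 := by
    rw [hγ'', piMap_mul, piMap_inv,
      piMap_piMap (sectionC n) rfl (pC n) (pC_sectionC a₀) (pC_sectionC a₀) α,
      piMap_congr (y := a₀) pC_comp_sectionC _ rfl, piMap_id rfl α, ← hα, mul_inv_cancel]
  have hexact : GenLoop.Homotopic (gmap (pC n) (pC_sectionC a₀) e) GenLoop.const := by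
    apply Quotient.exact (s := GenLoop.Homotopic.setoid (Fin (k + 2)) a₀)
    show hmk (gmap (pC n) (pC_sectionC a₀) e) = hmk GenLoop.const
    rw [← piMap_mk, ← he, hpγ, hmk_one]
  obtain ⟨H⟩ := hexact
  have he2 : ∀ z : Fin (k + 2) → I, ((e z : QTilde n)).1.1 =
      ((H.toContinuousMap (0, z) : Metric.sphere (0 : EuclideanSpace ℝ (Fin (2 * n))) 1) :
        EuclideanSpace ℝ (Fin (2 * n))) := by
    intro z
    have h0 := H.apply_zero z
    exact (congrArg Subtype.val h0).symm
  obtain ⟨L, hL0, hLp, hLstat⟩ := hlp H.toContinuousMap e.1 he2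
  have hGstat : ∀ z ∈ Cube.boundary (Fin (k + 2)), ∀ t : I,
      H.toContinuousMap (t, z) = H.toContinuousMap (0, z) := by
    intro z hz t
    have h1 := H.prop t z hz
    have h2 := H.prop 0 z hz
    show (H.curry t) z = (H.curry 0) z
    rw [h1, h2]
  have hstat : ∀ z ∈ Cube.boundary (Fin (k + 2)), ∀ t : I, L (t, z) = e z := fun z hz t =>
    hLstat z (hGstat z hz) t
  have hfst : ∀ z, (L (1, z)).1.1 = (a₀ : EuclideanSpace ℝ (Fin (2 * n))) := by
    intro z
    rw [hLp (1, z)]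
    have h1 := H.apply_one z
    show (↑(H (1, z)) : EuclideanSpace ℝ (Fin (2 * n))) = _
    rw [h1]
    rfl
  set bhat : Ω^ (Fin (k + 2)) (Fib a₀) (fibBase a₀) :=
    ⟨⟨fun z => ⟨(L (1, z)).1.2, (L (1, z)).2.2.1, by rw [← hfst z]; exact (L (1, z)).2.2.2⟩,
      by
        apply Continuous.subtype_mk
        exact continuous_snd.comp (continuous_subtype_val.comp
          (L.continuous.comp ((continuous_const.prodMk continuous_id :
            Continuous fun z : Fin (k + 2) → I => ((1 : I), z)))))⟩,
      by
        intro z hz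
        apply Subtype.ext
        show (L (1, z)).1.2 = (fibBase a₀).1
        rw [hstat z hz 1, GenLoop.boundary e z hz]
        rfl⟩ with hbhat
  have hfinal : GenLoop.Homotopic e (gmap (fibC a₀) (fibC_base a₀) bhat) := by
    refine ⟨⟨⟨⟨fun q => L q, L.continuous⟩, ?_, ?_⟩, ?_⟩⟩
    · intro z
      exact hL0 z
    · intro z
      apply Subtype.ext
      refine Prod.ext ?_ rfl
      exact hfst z
    · intro t z hz
      exact hstat z hz t
  refine ⟨hmk bhat, ?_⟩
  have h8' : hmk e = piMap (Fin (k + 2)) (fibC a₀) (fibC_base a₀) (hmk bhat) := by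
    rw [piMap_mk]
    exact hmk_sound hfinal
  have h8 : γ'' = piMap (Fin (k + 2)) (fibC a₀) (fibC_base a₀) (hmk bhat) := he.trans h8'
  have h9 : γ = γ'' * piMap (Fin (k + 2)) (sectionC n) rfl α := by
    rw [hγ'', inv_mul_cancel_right]
  rw [h9, h8]
  exact mul_comm _ _

lemma iota_injective (β : π_ (k + 2) (Fib a₀) (fibBase a₀))
    (h : piMap (Fin (k + 2)) (fibC a₀) (fibC_base a₀) β = 1) : β = 1 := by
  classical
  obtain ⟨b, hb⟩ := hmk_exists β
  have h' : hmk (gmap (fibC a₀) (fibC_base a₀) b) = hmk (GenLoop.const) := by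
    rw [← piMap_mk, ← hb, h, hmk_one]
  obtain ⟨H⟩ := Quotient.exact
    (s := GenLoop.Homotopic.setoid (Fin (k + 2)) (sectionC n a₀)) h'
  have hH0 : ∀ w, H (0, w) = fibC a₀ (b w) := fun w => H.apply_zero w
  have hH1 : ∀ w, H (1, w) = sectionC n a₀ := fun w => H.apply_one w
  have hHbd : ∀ (t : I) (w : Fin (k + 2) → I), w ∈ Cube.boundary (Fin (k + 2)) →
      H (t, w) = fibC a₀ (b w) := fun t w hw => H.prop t w hw
  have h01 : (0 : Fin (k + 3)) ≠ 1 := by simp [Fin.ext_iff]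
  have hone : (1 : Fin (k + 3)) = (0 : Fin (k + 2)).succ := (Fin.succ_zero_eq_one).symm
  have htail : ∀ (y : Fin (k + 3) → I) (v : I),
      Fin.tail (Function.update y 1 v) = Function.update (Fin.tail y) 0 v := by
    intro y v
    rw [hone]
    exact Fin.tail_update_succ y 0 v
  have hhead : ∀ (y : Fin (k + 3) → I) (v : I), (Function.update y 1 v) 0 = y 0 :=
    fun y v => Function.update_of_ne h01 v y
  have hHEcont : Continuous fun y : Fin (k + 3) → I => H (y 0, Fin.tail y) :=
    H.toContinuousMap.continuous.comp
      ((continuous_apply (0 : Fin (k + 3))).prodMk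
        (continuous_pi fun j : Fin (k + 2) => continuous_apply j.succ))
  set HE : C(Fin (k + 3) → I, QTilde n) := ⟨fun y => H (y 0, Fin.tail y), hHEcont⟩ with hHE
  set ghat : Ω^ (Fin (k + 3)) (Metric.sphere (0 : EuclideanSpace ℝ (Fin (2 * n))) 1) a₀ :=
    ⟨(pC n).comp HE, by
      rintro y ⟨i, hi⟩
      show pC n (H (y 0, Fin.tail y)) = a₀
      rcases eq_or_ne i 0 with rfl | hne
      · rcases hi with hi | hi
        · rw [hi, hH0]
          exact pC_fibC a₀ _
        · rw [hi, hH1]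
          exact pC_sectionC a₀
      · obtain ⟨j, rfl⟩ := Fin.eq_succ_of_ne_zero hne
        have hw : Fin.tail y ∈ Cube.boundary (Fin (k + 2)) := ⟨j, hi⟩
        rw [hHbd (y 0) _ hw]
        exact pC_fibC a₀ _⟩ with hghatdef
  set ghat' := GenLoop.transAt 1 ghat (GenLoop.symmAt 1 ghat) with hghat'
  have hclass : hmk ghat' = hmk (GenLoop.const) := by
    rw [← hmk_one, hghat']
    rw [show (hmk (GenLoop.transAt (1 : Fin (k + 3)) ghat (GenLoop.symmAt 1 ghat))
          : π_ (k + 3) _ a₀)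
        = hmk (GenLoop.symmAt 1 ghat) * hmk ghat from (HomotopyGroup.mul_spec).symm]
    rw [show (hmk (GenLoop.symmAt (1 : Fin (k + 3)) ghat) : π_ (k + 3) _ a₀)
        = (hmk ghat)⁻¹ from HomotopyGroup.inv_spec.symm]
    exact inv_mul_cancel _
  obtain ⟨Ghat⟩ := Quotient.exact
    (s := GenLoop.Homotopic.setoid (Fin (k + 3)) a₀) hclass
  -- the mixed lift `Hhat` of `ghat'`
  have hQ1 : ∀ w : Fin (k + 3) → I, w 1 = 1 → HE w = sectionC n a₀ := by
    intro w hw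
    have hwb : Fin.tail w ∈ Cube.boundary (Fin (k + 2)) :=
      ⟨0, Or.inr (by rw [show Fin.tail w 0 = w 1 from by rw [hone]; rfl]; exact hw)⟩
    show H (w 0, Fin.tail w) = _
    rw [hHbd _ _ hwb, GenLoop.boundary b _ hwb]
    exact fibC_base a₀
  have hsplit_cont : Continuous fun y : Fin (k + 3) → I =>
      if ((y 1 : I) : ℝ) ≤ 1 / 2
      then HE (Function.update y 1 (Set.projIcc (0:ℝ) 1 zero_le_one (2 * ((y 1 : I) : ℝ))))
      else sectionC n (ghat.1 (Function.update y 1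
        (unitInterval.symm (Set.projIcc (0:ℝ) 1 zero_le_one (2 * ((y 1 : I) : ℝ) - 1))))) := by
    have hy1 : Continuous fun y : Fin (k + 3) → I => ((y 1 : I) : ℝ) :=
      continuous_subtype_val.comp (continuous_apply (1 : Fin (k + 3)))
    refine Continuous.if_le ?_ ?_ hy1 continuous_const ?_
    · exact HE.continuous.comp (continuous_id.update 1
        (continuous_projIcc.comp (continuous_const.mul hy1)))
    · exact (sectionC n).continuous.comp (ghat.1.continuous.comp (continuous_id.update 1
        (unitInterval.continuous_symm.comp (continuous_projIcc.comp
          ((continuous_const.mul hy1).sub continuous_const)))))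
    · intro y hy
      have e1 : Set.projIcc (0:ℝ) 1 zero_le_one (2 * ((y 1 : I) : ℝ)) = 1 := by
        apply Subtype.ext
        rw [Set.coe_projIcc, hy]
        norm_num
      have e2 : unitInterval.symm
          (Set.projIcc (0:ℝ) 1 zero_le_one (2 * ((y 1 : I) : ℝ) - 1)) = 1 := by
        rw [hy]
        rw [show (2 : ℝ) * (1 / 2) - 1 = 0 by norm_num]
        rw [show Set.projIcc (0:ℝ) 1 zero_le_one 0 = 0 from Subtype.ext (by
          rw [Set.coe_projIcc]; norm_num)]
        exact unitInterval.symm_zero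
      rw [e1, e2]
      have e3 := hQ1 (Function.update y 1 1) (Function.update_self _ _ _)
      show HE (Function.update y 1 1) = sectionC n (pC n (HE (Function.update y 1 1)))
      rw [e3, pC_sectionC]
  set Hhat : C(Fin (k + 3) → I, QTilde n) := ⟨_, hsplit_cont⟩ with hHhatdef
  have hproj : ∀ y, pC n (Hhat y) = ghat' y := by
    intro y
    rw [hghat']
    show pC n (if _ then _ else _) = (GenLoop.transAt 1 ghat (GenLoop.symmAt 1 ghat)) y
    simp only [GenLoop.transAt, GenLoop.symmAt, GenLoop.coe_copy]
    split_ifs with hc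
    · rfl
    · rw [pC_sectionC]
      refine congrArg (fun w : Fin (k + 3) → I => ghat w) ?_
      funext j
      rcases eq_or_ne j 1 with rfl | hj
      · rw [Function.update_self, if_pos rfl, Function.update_self]
      · rw [Function.update_of_ne hj, if_neg hj, Function.update_of_ne hj]
  have he2 : ∀ y : Fin (k + 3) → I, (Hhat y).1.1 =
      ((Ghat.toContinuousMap (0, y) : Metric.sphere (0 : EuclideanSpace ℝ (Fin (2 * n))) 1) :
        EuclideanSpace ℝ (Fin (2 * n))) := by
    intro y
    have h0 := Ghat.apply_zero y
    exact (congrArg Subtype.val (hproj y)).trans (congrArg Subtype.val h0).symm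
  obtain ⟨L, hL0, hLp, hLstat⟩ := hlp Ghat.toContinuousMap Hhat he2
  have hGstat : ∀ y ∈ Cube.boundary (Fin (k + 3)), ∀ t : I,
      Ghat.toContinuousMap (t, y) = Ghat.toContinuousMap (0, y) := by
    intro y hy t
    have h1 := Ghat.prop t y hy
    have h2 := Ghat.prop 0 y hy
    show (Ghat.curry t) y = (Ghat.curry 0) y
    rw [h1, h2]
  have hstat : ∀ y ∈ Cube.boundary (Fin (k + 3)), ∀ t : I, L (t, y) = Hhat y :=
    fun y hy t => hLstat y (hGstat y hy) t
  have hfst1 : ∀ y, (L (1, y)).1.1 = (a₀ : EuclideanSpace ℝ (Fin (2 * n))) := by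
    intro y
    rw [hLp (1, y)]
    have h1 := Ghat.apply_one y
    show (↑(Ghat (1, y)) : EuclideanSpace ℝ (Fin (2 * n))) = _
    rw [h1]
    rfl
  have hbd0 : ∀ z : Fin (k + 2) → I,
      (Fin.cons (0 : I) z : Fin (k + 3) → I) ∈ Cube.boundary (Fin (k + 3)) :=
    fun z => ⟨0, Or.inl (Fin.cons_zero _ _)⟩
  have hbd1 : ∀ z : Fin (k + 2) → I,
      (Fin.cons (1 : I) z : Fin (k + 3) → I) ∈ Cube.boundary (Fin (k + 3)) :=
    fun z => ⟨0, Or.inr (Fin.cons_zero _ _)⟩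
  have hbdz : ∀ z ∈ Cube.boundary (Fin (k + 2)), ∀ t : I,
      (Fin.cons t z : Fin (k + 3) → I) ∈ Cube.boundary (Fin (k + 3)) := by
    intro z hz t
    obtain ⟨j, hj⟩ := hz
    exact ⟨j.succ, by rwa [Fin.cons_succ]⟩
  have hcons1 : ∀ (t : I) (z : Fin (k + 2) → I), (Fin.cons t z : Fin (k + 3) → I) 1 = z 0 := by
    intro t z
    rw [hone, Fin.cons_succ]
  have hval_then : ∀ y : Fin (k + 3) → I, ((y 1 : I) : ℝ) ≤ 1 / 2 →
      Hhat y = H (y 0, Function.update (Fin.tail y) 0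
        (Set.projIcc (0:ℝ) 1 zero_le_one (2 * ((y 1 : I) : ℝ)))) := by
    intro y hy
    show (if _ then _ else _) = _
    rw [if_pos hy]
    show H ((Function.update y 1 _) 0, Fin.tail (Function.update y 1 _)) = _
    rw [hhead, htail]
  have hval_else : ∀ y : Fin (k + 3) → I, ¬ ((y 1 : I) : ℝ) ≤ 1 / 2 →
      Hhat y = sectionC n (pC n (H (y 0, Function.update (Fin.tail y) 0
        (unitInterval.symm (Set.projIcc (0:ℝ) 1 zero_le_one (2 * ((y 1 : I) : ℝ) - 1)))))) := by
    intro y hy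
    show (if _ then _ else _) = _
    rw [if_neg hy]
    show sectionC n (pC n (H ((Function.update y 1 _) 0, Fin.tail (Function.update y 1 _)))) = _
    rw [hhead, htail]
  set bF := GenLoop.transAt 0 b GenLoop.const with hbFdef
  have hbF_then : ∀ z : Fin (k + 2) → I, ((z 0 : I) : ℝ) ≤ 1 / 2 →
      bF z = b (Function.update z 0 (Set.projIcc (0:ℝ) 1 zero_le_one (2 * ((z 0 : I) : ℝ)))) := by
    intro z hz
    rw [hbFdef]
    show (GenLoop.transAt 0 b GenLoop.const) z = _
    simp only [GenLoop.transAt, GenLoop.coe_copy]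
    rw [if_pos hz]
  have hbF_else : ∀ z : Fin (k + 2) → I, ¬ ((z 0 : I) : ℝ) ≤ 1 / 2 → bF z = fibBase a₀ := by
    intro z hz
    rw [hbFdef]
    show (GenLoop.transAt 0 b GenLoop.const) z = _
    simp only [GenLoop.transAt, GenLoop.coe_copy]
    rw [if_neg hz]
    rfl
  have hmaster0 : ∀ z, (Hhat (Fin.cons 0 z)).1.2 =
      (bF z).1 := by
    intro z
    by_cases hc : ((z 0 : I) : ℝ) ≤ 1 / 2
    · rw [hval_then _ (by rw [hcons1]; exact hc), hbF_then z hc]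
      simp only [Fin.cons_zero, Fin.tail_cons, hcons1]
      rw [hH0]
      rfl
    · rw [hval_else _ (by rw [hcons1]; exact hc), hbF_else z hc]
      simp only [Fin.cons_zero, Fin.tail_cons, hcons1]
      rw [hH0, pC_fibC]
      rfl
  have hmaster1 : ∀ z, (Hhat (Fin.cons 1 z)).1.2 =
      (fibBase a₀).1 := by
    intro z
    by_cases hc : ((z 0 : I) : ℝ) ≤ 1 / 2
    · rw [hval_then _ (by rw [hcons1]; exact hc)]
      simp only [Fin.cons_zero, Fin.tail_cons, hcons1]
      rw [hH1]
      rfl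
    · rw [hval_else _ (by rw [hcons1]; exact hc)]
      simp only [Fin.cons_zero, Fin.tail_cons, hcons1]
      rw [hH1, pC_sectionC]
      rfl
  have hmasterB : ∀ (t : I) (z : Fin (k + 2) → I), z ∈ Cube.boundary (Fin (k + 2)) →
      (Hhat (Fin.cons t z)).1.2 = (bF z).1 := by
    intro t z hz
    have hzb := GenLoop.boundary bF z hz
    rw [hzb]
    obtain ⟨j, hj⟩ := hz
    by_cases hc : ((z 0 : I) : ℝ) ≤ 1 / 2
    · rw [hval_then _ (by rw [hcons1]; exact hc)]
      simp only [Fin.cons_zero, Fin.tail_cons, hcons1]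
      have hmem : Function.update z 0
          (Set.projIcc (0:ℝ) 1 zero_le_one (2 * ((z 0 : I) : ℝ)))
          ∈ Cube.boundary (Fin (k + 2)) := by
        rcases eq_or_ne j 0 with rfl | hj0
        · rcases hj with h0 | h1
          · refine ⟨0, Or.inl ?_⟩
            rw [Function.update_self]
            apply Subtype.ext
            rw [Set.coe_projIcc, h0]
            norm_num
          · exfalso
            rw [h1] at hc
            norm_num at hc
        · exact ⟨j, by rwa [Function.update_of_ne hj0]⟩
      rw [hHbd t _ hmem, GenLoop.boundary b _ hmem]
      rfl
    · rw [hval_else _ (by rw [hcons1]; exact hc)]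
      simp only [Fin.cons_zero, Fin.tail_cons, hcons1]
      have hmem : Function.update z 0
          (unitInterval.symm (Set.projIcc (0:ℝ) 1 zero_le_one (2 * ((z 0 : I) : ℝ) - 1)))
          ∈ Cube.boundary (Fin (k + 2)) := by
        rcases eq_or_ne j 0 with rfl | hj0
        · rcases hj with h0 | h1
          · exfalso
            rw [h0] at hc
            norm_num at hc
          · refine ⟨0, Or.inl ?_⟩
            rw [Function.update_self, h1]
            rw [show (2 : ℝ) * ((1 : I) : ℝ) - 1 = 1 by norm_num]
            rw [show Set.projIcc (0:ℝ) 1 zero_le_one 1 = 1 from Subtype.ext (by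
              rw [Set.coe_projIcc]; norm_num)]
            exact unitInterval.symm_one
        · exact ⟨j, by rwa [Function.update_of_ne hj0]⟩
      rw [hHbd t _ hmem, pC_fibC]
      rfl
  -- assemble the homotopy in the fibre
  have hconscont : Continuous fun q : I × (Fin (k + 2) → I) =>
      (Fin.cons q.1 q.2 : Fin (k + 3) → I) := by
    refine continuous_pi fun i => ?_
    refine Fin.cases ?_ ?_ i
    · exact continuous_fst
    · intro j
      exact (continuous_apply j).comp continuous_snd
  have hLmem : ∀ q : I × (Fin (k + 2) → I),
      ⟪(a₀ : EuclideanSpace ℝ (Fin (2 * n))), (L (1, Fin.cons q.1 q.2)).1.2⟫ = 0 := by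
    intro q
    rw [← hfst1 (Fin.cons q.1 q.2)]
    exact (L (1, Fin.cons q.1 q.2)).2.2.2
  have hRfinal : GenLoop.Homotopic bF (GenLoop.const) := by
    refine ⟨⟨⟨⟨fun q => ⟨(L (1, Fin.cons q.1 q.2)).1.2,
        (L (1, Fin.cons q.1 q.2)).2.2.1, hLmem q⟩, ?_⟩, ?_, ?_⟩, ?_⟩⟩
    · apply Continuous.subtype_mk
      exact continuous_snd.comp (continuous_subtype_val.comp (L.continuous.comp
        (continuous_const.prodMk hconscont)))
    · intro z
      apply Subtype.ext
      show (L (1, Fin.cons 0 z)).1.2 = _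
      rw [hstat _ (hbd0 z) 1]
      exact hmaster0 z
    · intro z
      apply Subtype.ext
      show (L (1, Fin.cons 1 z)).1.2 = _
      rw [hstat _ (hbd1 z) 1]
      exact hmaster1 z
    · intro t z hz
      apply Subtype.ext
      show (L (1, Fin.cons t z)).1.2 = _
      rw [hstat _ (hbdz z hz t) 1]
      exact hmasterB t z hz
  rw [hb]
  have h1 : hmk (GenLoop.const : Ω^ (Fin (k + 2)) (Fib a₀) (fibBase a₀)) * hmk b = hmk bF :=
    HomotopyGroup.mul_spec
  have h2 : hmk bF = (1 : π_ (k + 2) (Fib a₀) (fibBase a₀)) := by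
    rw [hmk_sound hRfinal, hmk_one]
  calc hmk b = 1 * hmk b := (one_mul _).symm
    _ = hmk (GenLoop.const : Ω^ (Fin (k + 2)) (Fib a₀) (fibBase a₀)) * hmk b := by rw [hmk_one]
    _ = hmk bF := h1
    _ = 1 := h2

lemma iota_inj2 (β β' : π_ (k + 2) (Fib a₀) (fibBase a₀))
    (h : piMap (Fin (k + 2)) (fibC a₀) (fibC_base a₀) β
       = piMap (Fin (k + 2)) (fibC a₀) (fibC_base a₀) β') : β = β' := by
  have hF : Function.Injective
      (MonoidHom.mk' (piMap (Fin (k + 2)) (fibC a₀) (fibC_base a₀))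
        (fun a b => piMap_mul (fibC a₀) (fibC_base a₀) a b)) := by
    rw [injective_iff_map_eq_one]
    exact fun a ha => iota_injective k a₀ a ha
  exact hF h

end MainLemmas

/-- For `n ≥ 2` (here `n = m + 2`, so `2n - 1 = 2m + 3`), the map
`(α, β) ↦ σ_*(α) + ι_*(β)` is a group isomorphism
`π_{2n-1}(S^{2n-1}, a₀) × π_{2n-1}(S(a₀^⊥), -J₀a₀) ≅ π_{2n-1}(Q̃_n, (a₀, -J₀a₀))`. -/
theorem splitting_of_homotopy_of_QTilde (n m : ℕ) (hn : n = m + 2)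
    (a₀ : Metric.sphere (0 : EuclideanSpace ℝ (Fin (2 * n))) 1) :
    Function.Bijective (combinedMap n m a₀) ∧
    ∀ x y, combinedMap n m a₀ (x * y) = combinedMap n m a₀ x * combinedMap n m a₀ y := by
  have e1 : ∀ α : π_ (2 * m + 3) (Metric.sphere (0 : EuclideanSpace ℝ (Fin (2 * n))) 1) a₀,
      piMap (Fin (2 * m + 3)) (pC n) (pC_sectionC a₀)
        (piMap (Fin (2 * m + 3)) (sectionC n) rfl α) = α := by
    intro α
    rw [piMap_piMap (sectionC n) rfl (pC n) (pC_sectionC a₀) (pC_sectionC a₀) α,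
      piMap_congr (y := a₀) pC_comp_sectionC _ rfl]
    exact piMap_id rfl α
  have e2 : ∀ β : π_ (2 * m + 3) (Fib a₀) (fibBase a₀),
      piMap (Fin (2 * m + 3)) (pC n) (pC_sectionC a₀)
        (piMap (Fin (2 * m + 3)) (fibC a₀) (fibC_base a₀) β) = 1 := by
    intro β
    rw [piMap_piMap (fibC a₀) (fibC_base a₀) (pC n) (pC_sectionC a₀)
      (pC_fibC a₀ (fibBase a₀)) β,
      piMap_congr (y := a₀) (pC_comp_fibC a₀) _ rfl]
    exact piMap_constmap rfl β
  refine ⟨⟨?_, ?_⟩, ?_⟩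
  · rintro ⟨α, β⟩ ⟨α', β'⟩ h
    simp only [combinedMap] at h
    have hp := congrArg (piMap (Fin (2 * m + 3)) (pC n) (pC_sectionC a₀)) h
    rw [piMap_mul, piMap_mul, e1, e1, e2, e2, mul_one, mul_one] at hp
    subst hp
    have h2 : piMap (Fin (2 * m + 3)) (fibC a₀) (fibC_base a₀) β
        = piMap (Fin (2 * m + 3)) (fibC a₀) (fibC_base a₀) β' := by rwa [mul_right_inj] at h
    rw [iota_inj2 (2 * m + 1) a₀ β β' h2]
  · rintro γ
    obtain ⟨β, hβ⟩ := surj_decomp (2 * m + 1) a₀ γ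
    exact ⟨(piMap (Fin (2 * m + 3)) (pC n) (pC_sectionC a₀) γ, β), hβ.symm⟩
  · intro x y
    show piMap _ (sectionC n) rfl (x.1 * y.1) * piMap _ (fibC a₀) (fibC_base a₀) (x.2 * y.2) = _
    rw [piMap_mul, piMap_mul]
    exact mul_mul_mul_comm _ _ _ _

end
end

section
/- Let R be a unique factorization domain and let p, q, f, g ∈ R with p ≠ 0, q ≠ 0, p and q having no common non-unit factor, and f ≠ 0. Define R-linear maps d⁻ : R² → R², d⁻(a,b) = (-q(ga + fb), p(ga + fb)) and d⁺ : R² → R², d⁺(u₁,u₂) = (f(pu₁ + qu₂), -g(pu₁ + qu₂)). Then d⁺ ∘ d⁻ = 0, and the quotient module ker(d⁺)/image(d⁻) is isomorphic as an R-module to R/(f,g), the quotient of R by the ideal generated by f and g. -/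
/-- The odd-to-even differential of the 2-periodic Clifford (Koszul) complex associated to the
isotropic section `(f•(p,q), g•((p,q)⌟ω))`: `d⁻(a,b) = (-q(ga+fb), p(ga+fb))`. -/
noncomputable def dMinus {R : Type*} [CommRing R] (p q f g : R) : (R × R) →ₗ[R] (R × R) where
  toFun ab := (-(q * (g * ab.1 + f * ab.2)), p * (g * ab.1 + f * ab.2))
  map_add' a b := by
    simp only [Prod.fst_add, Prod.snd_add, Prod.mk_add_mk, Prod.mk.injEq]
    constructor <;> ring
  map_smul' c a := by
    simp only [Prod.smul_fst, Prod.smul_snd, smul_eq_mul, RingHom.id_apply, Prod.smul_mk,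
      Prod.mk.injEq]
    constructor <;> ring

/-- The even-to-odd differential of the 2-periodic Clifford (Koszul) complex:
`d⁺(u₁,u₂) = (f(pu₁+qu₂), -g(pu₁+qu₂))`. -/
noncomputable def dPlus {R : Type*} [CommRing R] (p q f g : R) : (R × R) →ₗ[R] (R × R) where
  toFun u := (f * (p * u.1 + q * u.2), -(g * (p * u.1 + q * u.2)))
  map_add' a b := by
    simp only [Prod.fst_add, Prod.snd_add, Prod.mk_add_mk, Prod.mk.injEq]
    constructor <;> ring
  map_smul' c a := by
    simp only [Prod.smul_fst, Prod.smul_snd, smul_eq_mul, RingHom.id_apply, Prod.smul_mk,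
      Prod.mk.injEq]
    constructor <;> ring

/-- Over a UFD, with `p,q` relatively prime nonzero and `f ≠ 0`,
`d⁺ ∘ d⁻ = 0` and `ker d⁺ / im d⁻ ≅ R/(f,g)`. -/
theorem odd_cohomology_of_clifford_complex {R : Type*} [CommRing R] [IsDomain R]
    [UniqueFactorizationMonoid R] (p q f g : R)
    (hp : p ≠ 0) (hq : q ≠ 0) (hpq : IsRelPrime p q) (hf : f ≠ 0) :
    (dPlus p q f g).comp (dMinus p q f g) = 0 ∧
    Nonempty
      ((↥(LinearMap.ker (dPlus p q f g)) ⧸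
          (LinearMap.range (dMinus p q f g)).comap (LinearMap.ker (dPlus p q f g)).subtype)
        ≃ₗ[R] (R ⧸ Ideal.span {f, g})) := by
  constructor
  · ext ab <;>
    · simp only [LinearMap.comp_apply, dMinus, dPlus, LinearMap.coe_mk, AddHom.coe_mk,
        LinearMap.zero_apply, Prod.fst_zero, Prod.snd_zero]
      ring
  -- the parametrization map ψ : R → ker d⁺, c ↦ (q c, -(p c))
  set K := LinearMap.ker (dPlus p q f g) with hK
  set N := (LinearMap.range (dMinus p q f g)).comap K.subtype with hN
  have hmem : ∀ c : R, (q * c, -(p * c)) ∈ K := by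
    intro c
    simp only [hK, LinearMap.mem_ker, dPlus, LinearMap.coe_mk, AddHom.coe_mk,
      Prod.mk_eq_zero]
    constructor <;> ring
  let ψ0 : R →ₗ[R] R × R :=
    { toFun := fun c => (q * c, -(p * c))
      map_add' := fun a b => by simp only [Prod.mk_add_mk, Prod.mk.injEq]; constructor <;> ring
      map_smul' := fun a b => by
        simp only [smul_eq_mul, RingHom.id_apply, Prod.smul_mk, Prod.mk.injEq]
        constructor <;> ring }
  let ψ : R →ₗ[R] K := LinearMap.codRestrict K ψ0 hmem
  let Φ : R →ₗ[R] (K ⧸ N) := N.mkQ.comp ψ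
  have hsurj : Function.Surjective Φ := by
    intro x
    obtain ⟨u, rfl⟩ := N.mkQ_surjective x
    obtain ⟨⟨u₁, u₂⟩, hu⟩ := u
    have hu' : f * (p * u₁ + q * u₂) = 0 ∧ -(g * (p * u₁ + q * u₂)) = 0 := by
      simpa [hK, LinearMap.mem_ker, dPlus, Prod.ext_iff] using hu
    have hsum : p * u₁ + q * u₂ = 0 := by
      rcases mul_eq_zero.1 hu'.1 with h | h
      · exact absurd h hf
      · exact h
    have hdvd : q ∣ u₁ := by
      refine (hpq.symm).dvd_of_dvd_mul_left (y := p) ⟨-u₂, ?_⟩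
      linear_combination hsum
    obtain ⟨c, rfl⟩ := hdvd
    have hu₂ : u₂ = -(p * c) := by
      have : q * (p * c + u₂) = 0 := by linear_combination hsum
      rcases mul_eq_zero.1 this with h | h
      · exact absurd h hq
      · linear_combination h
    refine ⟨c, ?_⟩
    simp only [Φ, LinearMap.comp_apply]
    congr 1
    apply Subtype.ext
    simp only [ψ, LinearMap.codRestrict_apply, ψ0, LinearMap.coe_mk, AddHom.coe_mk]
    exact Prod.ext rfl (by rw [hu₂])
  have hker : LinearMap.ker Φ = Ideal.span {f, g} := by
    ext c
    simp only [Φ, LinearMap.mem_ker, LinearMap.comp_apply, Submodule.mkQ_apply,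
      Submodule.Quotient.mk_eq_zero]
    constructor
    · intro hc
      simp only [hN, Submodule.mem_comap, Submodule.coe_subtype, LinearMap.mem_range] at hc
      obtain ⟨⟨a, b⟩, hab⟩ := hc
      have hab' : -(q * (g * a + f * b)) = q * c ∧ p * (g * a + f * b) = -(p * c) := by
        simpa [dMinus, ψ, ψ0, Prod.ext_iff] using hab
      have hc' : c = -(g * a + f * b) := by
        have : q * (c + (g * a + f * b)) = 0 := by linear_combination -hab'.1
        rcases mul_eq_zero.1 this with h | h
        · exact absurd h hq
        · linear_combination h
      rw [hc']
      have hfmem : f ∈ Ideal.span ({f, g} : Set R) :=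
        Ideal.subset_span (by simp)
      have hgmem : g ∈ Ideal.span ({f, g} : Set R) :=
        Ideal.subset_span (by simp)
      exact neg_mem (add_mem (mul_comm g a ▸ Ideal.mul_mem_left _ a hgmem)
        (mul_comm f b ▸ Ideal.mul_mem_left _ b hfmem))
    · intro hc
      rw [Ideal.span_insert, Submodule.mem_sup] at hc
      obtain ⟨y, hy, z, hz, rfl⟩ := hc
      rw [Ideal.mem_span_singleton] at hy hz
      obtain ⟨a, rfl⟩ := hy
      obtain ⟨b, rfl⟩ := hz
      simp only [hN, Submodule.mem_comap, Submodule.coe_subtype, LinearMap.mem_range]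
      refine ⟨(-b, -a), ?_⟩
      show ((-(q * (g * -b + f * -a)), p * (g * -b + f * -a)) : R × R)
        = (q * (f * a + g * b), -(p * (f * a + g * b)))
      exact Prod.ext (by ring) (by ring)
  exact ⟨((Submodule.quotEquivOfEq _ _ hker.symm).trans
    (Φ.quotKerEquivOfSurjective hsurj)).symm⟩
end

section
/- Let R = ℂ[x,y], let d ≥ 1 and 0 ≤ i, j ≤ d be integers, and define R-linear maps φ, ψ : R² → R² by φ(u,v) = (y^d·u + x^{d-i}y^{d-j}·v, x^i y^j·u + x^d·v) and ψ(u,v) = (x^d·u - x^{d-i}y^{d-j}·v, -x^i y^j·u + y^d·v). Then φ ∘ ψ = 0 = ψ ∘ φ, and there are R-module isomorphisms ker(φ)/image(ψ) ≅ ℂ[x,y]/(x^i, y^{d-j}) and ker(ψ)/image(φ) ≅ ℂ[x,y]/(y^j, x^{d-i}). In particular these quotients are finite dimensional over ℂ, of dimensions i(d-j) and j(d-i) respectively. -/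
open MvPolynomial

/-- `ℂ[x,y]`. -/
noncomputable abbrev RPoly : Type := MvPolynomial (Fin 2) ℂ

/-- `x`. -/
noncomputable def px : RPoly := X 0

/-- `y`. -/
noncomputable def py : RPoly := X 1

/-- `φ(u,v) = (y^d u + x^{d-i} y^{d-j} v, x^i y^j u + x^d v)`, one differential of the
2-periodic Clifford complex of the running example. -/
noncomputable def phiMap (d i j : ℕ) : (RPoly × RPoly) →ₗ[RPoly] (RPoly × RPoly) where
  toFun uv := (py ^ d * uv.1 + px ^ (d - i) * py ^ (d - j) * uv.2,
               px ^ i * py ^ j * uv.1 + px ^ d * uv.2)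
  map_add' a b := by
    simp only [Prod.fst_add, Prod.snd_add, Prod.mk_add_mk, Prod.mk.injEq]
    constructor <;> ring
  map_smul' c a := by
    simp only [Prod.smul_fst, Prod.smul_snd, smul_eq_mul, RingHom.id_apply, Prod.smul_mk,
      Prod.mk.injEq]
    constructor <;> ring

/-- `ψ(u,v) = (x^d u - x^{d-i} y^{d-j} v, -x^i y^j u + y^d v)`, the other differential of the
2-periodic Clifford complex of the running example. -/
noncomputable def psiMap (d i j : ℕ) : (RPoly × RPoly) →ₗ[RPoly] (RPoly × RPoly) where
  toFun uv := (px ^ d * uv.1 - px ^ (d - i) * py ^ (d - j) * uv.2,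
               -(px ^ i * py ^ j * uv.1) + py ^ d * uv.2)
  map_add' a b := by
    simp only [Prod.fst_add, Prod.snd_add, Prod.mk_add_mk, Prod.mk.injEq]
    constructor <;> ring
  map_smul' c a := by
    simp only [Prod.smul_fst, Prod.smul_snd, smul_eq_mul, RingHom.id_apply, Prod.smul_mk,
      Prod.mk.injEq]
    constructor <;> ring

section Aux

open MvPolynomial Finsupp

lemma px_ne_zero : (px : RPoly) ≠ 0 := by unfold px; exact MvPolynomial.X_ne_zero 0

lemma py_ne_zero : (py : RPoly) ≠ 0 := by unfold py; exact MvPolynomial.X_ne_zero 1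

lemma prime_px : Prime px := by
  have h : Prime (MvPolynomial.finSuccEquiv ℂ 1 px) := by
    unfold px
    rw [MvPolynomial.finSuccEquiv_X_zero]
    exact Polynomial.prime_X
  exact (MulEquiv.prime_iff (MvPolynomial.finSuccEquiv ℂ 1)).mp h

lemma prime_py : Prime py := by
  have h : Prime (MvPolynomial.renameEquiv ℂ (Equiv.swap (0 : Fin 2) 1) py) := by
    unfold py
    rw [MvPolynomial.renameEquiv_apply, MvPolynomial.rename_X, Equiv.swap_apply_right]
    exact prime_px
  exact (MulEquiv.prime_iff (MvPolynomial.renameEquiv ℂ (Equiv.swap (0 : Fin 2) 1))).mp h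

lemma px_not_dvd_py_pow (b : ℕ) : ¬ px ∣ py ^ b := by
  rintro ⟨c, hc⟩
  have h := congrArg (MvPolynomial.eval (fun k : Fin 2 => if k = 0 then 0 else 1)) hc
  simp [px, py] at h

lemma py_not_dvd_px_pow (a : ℕ) : ¬ py ∣ px ^ a := by
  rintro ⟨c, hc⟩
  have h := congrArg (MvPolynomial.eval (fun k : Fin 2 => if k = 0 then (1:ℂ) else 0)) hc
  simp [px, py] at h

/-- The auxiliary map `w ↦ (p w, q w)`. -/
noncomputable def wMap (p q : RPoly) : RPoly →ₗ[RPoly] RPoly × RPoly where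
  toFun w := (p * w, q * w)
  map_add' a b := by simp only [mul_add, Prod.mk_add_mk]
  map_smul' c a := by
    simp only [smul_eq_mul, RingHom.id_apply, Prod.smul_mk, Prod.mk.injEq]
    constructor <;> ring

lemma wMap_apply (p q w : RPoly) : wMap p q w = (p * w, q * w) := rfl

/-- Abstract form of the cohomology computation: if `ker f` is parametrized by `wMap p q`
and the image of `g` corresponds to the ideal `(r, s)` under this parametrization, then
`ker f / im g ≅ R/(r,s)`. -/
theorem cliffordQuotAux (g : (RPoly × RPoly) →ₗ[RPoly] RPoly × RPoly)
    (K : Submodule RPoly (RPoly × RPoly))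
    (p q r s : RPoly) (hp : p ≠ 0)
    (hker : LinearMap.range (wMap p q) = K)
    (hgen1 : wMap p q r ∈ LinearMap.range g)
    (hgen2 : wMap p q s ∈ LinearMap.range g)
    (hsur : ∀ u v : RPoly, ∃ w ∈ Ideal.span {r, s}, wMap p q w = g (u, v)) :
    Nonempty ((↥K ⧸ (LinearMap.range g).comap K.subtype)
      ≃ₗ[RPoly] (RPoly ⧸ Ideal.span {r, s})) := by
  have hinj : Function.Injective (wMap p q) := by
    intro a b h
    have h1 : p * a = p * b := congrArg Prod.fst h
    exact mul_left_cancel₀ hp h1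
  let e : RPoly ≃ₗ[RPoly] K :=
    (LinearEquiv.ofInjective _ hinj).trans (LinearEquiv.ofEq _ _ hker)
  have he : ∀ w, (((e : RPoly →ₗ[RPoly] K) w : K) : RPoly × RPoly) = wMap p q w := fun w => rfl
  have hmap : Submodule.map (e : RPoly →ₗ[RPoly] K) (Ideal.span {r, s}) = (LinearMap.range g).comap K.subtype := by
    apply le_antisymm
    · rw [Submodule.map_le_iff_le_comap]
      rw [Ideal.span_le]
      rintro z hz
      simp only [Set.mem_insert_iff, Set.mem_singleton_iff] at hz
      rcases hz with rfl | rfl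
      · refine Submodule.mem_comap.mpr (Submodule.mem_comap.mpr ?_)
        rw [Submodule.coe_subtype, he]
        exact hgen1
      · refine Submodule.mem_comap.mpr (Submodule.mem_comap.mpr ?_)
        rw [Submodule.coe_subtype, he]
        exact hgen2
    · rintro z hz
      rw [Submodule.mem_comap] at hz
      obtain ⟨⟨u, v⟩, huv⟩ := hz
      obtain ⟨w, hw, hww⟩ := hsur u v
      refine Submodule.mem_map.mpr ⟨w, hw, ?_⟩
      apply Subtype.ext
      rw [he, hww, huv]
      rfl
  exact ⟨(Submodule.Quotient.equiv _ _ e hmap).symm⟩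

/-- exponent vector `(k, l)`. -/
noncomputable def expv (k l : ℕ) : Fin 2 →₀ ℕ := Finsupp.single 0 k + Finsupp.single 1 l

lemma expv_apply0 (k l : ℕ) : expv k l 0 = k := by
  simp [expv, Finsupp.single_apply]

lemma expv_apply1 (k l : ℕ) : expv k l 1 = l := by
  simp [expv, Finsupp.single_apply]

lemma expv_eq (m : Fin 2 →₀ ℕ) : expv (m 0) (m 1) = m := by
  ext k
  fin_cases k <;> simp [expv, Finsupp.single_apply]

/-- Truncated coefficient map. -/
noncomputable def coeffMap (a b : ℕ) : RPoly →ₗ[ℂ] (Fin a × Fin b → ℂ) where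
  toFun f := fun t => MvPolynomial.coeff (expv t.1 t.2) f
  map_add' f g := by funext t; simp [MvPolynomial.coeff_add]
  map_smul' c f := by funext t; simp [MvPolynomial.coeff_smul]

lemma coeffMap_surj (a b : ℕ) : Function.Surjective (coeffMap a b) := by
  intro g
  refine ⟨∑ t : Fin a × Fin b, MvPolynomial.monomial (expv t.1 t.2) (g t), ?_⟩
  funext t0
  show MvPolynomial.coeff (expv t0.1 t0.2) _ = g t0
  rw [MvPolynomial.coeff_sum]
  rw [Finset.sum_eq_single t0]
  · simp [MvPolynomial.coeff_monomial]
  · intro t _ htne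
    rw [MvPolynomial.coeff_monomial, if_neg]
    intro hcontra
    apply htne
    have h0 := congrArg (fun f => f 0) hcontra
    have h1 := congrArg (fun f => f 1) hcontra
    simp only [expv_apply0, expv_apply1] at h0 h1
    exact Prod.ext (Fin.ext h0) (Fin.ext h1)
  · intro h
    exact absurd (Finset.mem_univ t0) h

lemma coeffMap_ker (a b : ℕ) :
    LinearMap.ker (coeffMap a b) = (Ideal.span {px ^ a, py ^ b}).restrictScalars ℂ := by
  ext f
  simp only [LinearMap.mem_ker, Submodule.restrictScalars_mem]
  constructor
  · intro hf
    rw [← MvPolynomial.support_sum_monomial_coeff f]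
    apply Ideal.sum_mem
    intro m hm
    rcases le_or_gt a (m 0) with hma | hma
    · have hle : Finsupp.single (0 : Fin 2) a ≤ m := Finsupp.single_le_iff.mpr hma
      have hmono : (MvPolynomial.monomial m) (MvPolynomial.coeff m f)
          = px ^ a * (MvPolynomial.monomial (m - Finsupp.single 0 a))
              (MvPolynomial.coeff m f) := by
        unfold px
        rw [MvPolynomial.X_pow_eq_monomial, MvPolynomial.monomial_mul, one_mul]
        congr 1
        rw [add_tsub_cancel_of_le hle]
      rw [hmono]
      exact Ideal.mul_mem_right _ _ (Ideal.subset_span (by simp))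
    rcases le_or_gt b (m 1) with hmb | hmb
    · have hle : Finsupp.single (1 : Fin 2) b ≤ m := Finsupp.single_le_iff.mpr hmb
      have hmono : (MvPolynomial.monomial m) (MvPolynomial.coeff m f)
          = py ^ b * (MvPolynomial.monomial (m - Finsupp.single 1 b))
              (MvPolynomial.coeff m f) := by
        unfold py
        rw [MvPolynomial.X_pow_eq_monomial, MvPolynomial.monomial_mul, one_mul]
        congr 1
        rw [add_tsub_cancel_of_le hle]
      rw [hmono]
      exact Ideal.mul_mem_right _ _ (Ideal.subset_span (by simp))
    · exfalso
      have hc : MvPolynomial.coeff m f ≠ 0 := MvPolynomial.mem_support_iff.mp hm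
      have hz := congrFun hf (⟨m 0, hma⟩, ⟨m 1, hmb⟩)
      apply hc
      have : MvPolynomial.coeff (expv (m 0) (m 1)) f = 0 := hz
      rwa [expv_eq] at this
  · intro hf
    obtain ⟨c1, c2, hc⟩ := Ideal.mem_span_pair.mp hf
    funext t
    show MvPolynomial.coeff (expv t.1 t.2) f = 0
    rw [← hc]
    have h1 : MvPolynomial.coeff (expv t.1 t.2) (c1 * px ^ a) = 0 := by
      unfold px
      rw [MvPolynomial.X_pow_eq_monomial, MvPolynomial.coeff_mul_monomial', if_neg]
      intro hle
      have := Finsupp.single_le_iff.mp hle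
      rw [expv_apply0] at this
      omega
    have h2 : MvPolynomial.coeff (expv t.1 t.2) (c2 * py ^ b) = 0 := by
      unfold py
      rw [MvPolynomial.X_pow_eq_monomial, MvPolynomial.coeff_mul_monomial', if_neg]
      intro hle
      have := Finsupp.single_le_iff.mp hle
      rw [expv_apply1] at this
      omega
    rw [MvPolynomial.coeff_add, h1, h2, add_zero]

lemma quot_fin (a b : ℕ) :
    FiniteDimensional ℂ (RPoly ⧸ Ideal.span {px ^ a, py ^ b}) ∧
    Module.finrank ℂ (RPoly ⧸ Ideal.span {px ^ a, py ^ b}) = a * b := by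
  have e : (RPoly ⧸ Ideal.span {px ^ a, py ^ b}) ≃ₗ[ℂ] (Fin a × Fin b → ℂ) :=
    ((Submodule.Quotient.restrictScalarsEquiv ℂ (Ideal.span {px ^ a, py ^ b})).symm.trans
        (Submodule.quotEquivOfEq _ _ (coeffMap_ker a b).symm)).trans
      ((coeffMap a b).quotKerEquivOfSurjective (coeffMap_surj a b))
  constructor
  · exact Module.Finite.equiv e.symm
  · rw [e.finrank_eq, Module.finrank_fintype_fun_eq_card, Fintype.card_prod,
      Fintype.card_fin, Fintype.card_fin]

end Aux

lemma quot_fin' (a b : ℕ) :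
    FiniteDimensional ℂ (RPoly ⧸ Ideal.span {py ^ a, px ^ b}) ∧
    Module.finrank ℂ (RPoly ⧸ Ideal.span {py ^ a, px ^ b}) = a * b := by
  have hsp : (Ideal.span {py ^ a, px ^ b} : Ideal RPoly) = Ideal.span {px ^ b, py ^ a} := by
    rw [Set.pair_comm]
  rw [hsp, mul_comm]
  exact quot_fin b a

set_option maxHeartbeats 1000000 in
/-- For `R = ℂ[x,y]`, `d ≥ 1`, `0 ≤ i,j ≤ d`: the maps `φ`, `ψ` compose to
zero both ways, `ker φ/im ψ ≅ R/(xⁱ, y^{d-j})` and `ker ψ/im φ ≅ R/(yʲ, x^{d-i})`, and these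
quotients have `ℂ`-dimensions `i(d-j)` and `j(d-i)`. -/
theorem clifford_complex_running_example (d i j : ℕ) (hd : 1 ≤ d) (hi : i ≤ d) (hj : j ≤ d) :
    (phiMap d i j).comp (psiMap d i j) = 0 ∧ (psiMap d i j).comp (phiMap d i j) = 0 ∧
    Nonempty
      ((↥(LinearMap.ker (phiMap d i j)) ⧸
          (LinearMap.range (psiMap d i j)).comap (LinearMap.ker (phiMap d i j)).subtype)
        ≃ₗ[RPoly] (RPoly ⧸ Ideal.span {px ^ i, py ^ (d - j)})) ∧
    Nonempty
      ((↥(LinearMap.ker (psiMap d i j)) ⧸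
          (LinearMap.range (phiMap d i j)).comap (LinearMap.ker (psiMap d i j)).subtype)
        ≃ₗ[RPoly] (RPoly ⧸ Ideal.span {py ^ j, px ^ (d - i)})) ∧
    FiniteDimensional ℂ (RPoly ⧸ Ideal.span {px ^ i, py ^ (d - j)}) ∧
    Module.finrank ℂ (RPoly ⧸ Ideal.span {px ^ i, py ^ (d - j)}) = i * (d - j) ∧
    FiniteDimensional ℂ (RPoly ⧸ Ideal.span {py ^ j, px ^ (d - i)}) ∧
    Module.finrank ℂ (RPoly ⧸ Ideal.span {py ^ j, px ^ (d - i)}) = j * (d - i) := by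
  have hxx : px ^ (d - i) * px ^ i = px ^ d := by rw [← pow_add, Nat.sub_add_cancel hi]
  have hyy : py ^ (d - j) * py ^ j = py ^ d := by rw [← pow_add, Nat.sub_add_cancel hj]
  have hc1 : (phiMap d i j).comp (psiMap d i j) = 0 := by
    apply LinearMap.ext
    rintro ⟨u, v⟩
    show phiMap d i j (psiMap d i j (u, v)) = 0
    simp only [phiMap, psiMap, LinearMap.coe_mk, AddHom.coe_mk, Prod.mk_eq_zero]
    constructor <;> (rw [← hxx, ← hyy]; ring)
  have hc2 : (psiMap d i j).comp (phiMap d i j) = 0 := by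
    apply LinearMap.ext
    rintro ⟨u, v⟩
    show psiMap d i j (phiMap d i j (u, v)) = 0
    simp only [phiMap, psiMap, LinearMap.coe_mk, AddHom.coe_mk, Prod.mk_eq_zero]
    constructor <;> (rw [← hxx, ← hyy]; ring)
  have hkphi : LinearMap.range (wMap (px ^ (d - i)) (-(py ^ j))) = LinearMap.ker (phiMap d i j) := by
    ext z
    obtain ⟨u, v⟩ := z
    simp only [LinearMap.mem_range, LinearMap.mem_ker, phiMap, wMap, LinearMap.coe_mk,
      AddHom.coe_mk, Prod.mk.injEq, Prod.mk_eq_zero]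
    constructor
    · rintro ⟨w, hw1, hw2⟩
      constructor
      · rw [← hw1, ← hw2, ← hyy]; ring
      · rw [← hw1, ← hw2, ← hxx]; ring
    · rintro ⟨h1, h2⟩
      have key : py ^ j * u + px ^ (d - i) * v = 0 := by
        have h3 : py ^ (d - j) * (py ^ j * u + px ^ (d - i) * v) = 0 := by
          linear_combination h1 + u * hyy
        exact (mul_eq_zero.mp h3).resolve_left (pow_ne_zero _ py_ne_zero)
      have hdvd : px ^ (d - i) ∣ u := by
        refine prime_px.pow_dvd_of_dvd_mul_left (d - i) (px_not_dvd_py_pow j) ?_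
        exact ⟨-v, by linear_combination key⟩
      obtain ⟨w, rfl⟩ := hdvd
      refine ⟨w, rfl, ?_⟩
      have h4 : px ^ (d - i) * (py ^ j * w + v) = 0 := by linear_combination key
      have h5 := (mul_eq_zero.mp h4).resolve_left (pow_ne_zero _ px_ne_zero)
      linear_combination -h5
  have hkpsi : LinearMap.range (wMap (py ^ (d - j)) (px ^ i)) = LinearMap.ker (psiMap d i j) := by
    ext z
    obtain ⟨u, v⟩ := z
    simp only [LinearMap.mem_range, LinearMap.mem_ker, psiMap, wMap, LinearMap.coe_mk,
      AddHom.coe_mk, Prod.mk.injEq, Prod.mk_eq_zero]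
    constructor
    · rintro ⟨w, hw1, hw2⟩
      constructor
      · rw [← hw1, ← hw2, ← hxx]; ring
      · rw [← hw1, ← hw2, ← hyy]; ring
    · rintro ⟨h1, h2⟩
      have key : px ^ i * u - py ^ (d - j) * v = 0 := by
        have h3 : px ^ (d - i) * (px ^ i * u - py ^ (d - j) * v) = 0 := by
          linear_combination h1 + u * hxx
        exact (mul_eq_zero.mp h3).resolve_left (pow_ne_zero _ px_ne_zero)
      have hdvd : py ^ (d - j) ∣ u := by
        refine prime_py.pow_dvd_of_dvd_mul_left (d - j) (py_not_dvd_px_pow i) ?_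
        exact ⟨v, by linear_combination key⟩
      obtain ⟨w, rfl⟩ := hdvd
      refine ⟨w, rfl, ?_⟩
      have h4 : py ^ (d - j) * (px ^ i * w - v) = 0 := by linear_combination key
      have h5 := (mul_eq_zero.mp h4).resolve_left (pow_ne_zero _ py_ne_zero)
      linear_combination h5
  have hg1 : wMap (px ^ (d - i)) (-(py ^ j)) (px ^ i) ∈ LinearMap.range (psiMap d i j) := by
    refine ⟨(1, 0), ?_⟩
    simp only [psiMap, wMap, LinearMap.coe_mk, AddHom.coe_mk, Prod.mk.injEq]
    constructor
    · rw [← hxx]; ring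
    · ring
  have hg2 : wMap (px ^ (d - i)) (-(py ^ j)) (py ^ (d - j)) ∈ LinearMap.range (psiMap d i j) := by
    refine ⟨(0, -1), ?_⟩
    simp only [psiMap, wMap, LinearMap.coe_mk, AddHom.coe_mk, Prod.mk.injEq]
    constructor
    · ring
    · rw [← hyy]; ring
  have hs1 : ∀ u v : RPoly, ∃ w ∈ Ideal.span {px ^ i, py ^ (d - j)},
      wMap (px ^ (d - i)) (-(py ^ j)) w = psiMap d i j (u, v) := by
    intro u v
    refine ⟨px ^ i * u - py ^ (d - j) * v,
      Submodule.mem_span_pair.mpr ⟨u, -v, by simp only [smul_eq_mul]; ring⟩, ?_⟩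
    simp only [psiMap, wMap, LinearMap.coe_mk, AddHom.coe_mk, Prod.mk.injEq]
    constructor
    · rw [← hxx]; ring
    · rw [← hyy]; ring
  have hg1' : wMap (py ^ (d - j)) (px ^ i) (py ^ j) ∈ LinearMap.range (phiMap d i j) := by
    refine ⟨(1, 0), ?_⟩
    simp only [phiMap, wMap, LinearMap.coe_mk, AddHom.coe_mk, Prod.mk.injEq]
    constructor
    · rw [← hyy]; ring
    · ring
  have hg2' : wMap (py ^ (d - j)) (px ^ i) (px ^ (d - i)) ∈ LinearMap.range (phiMap d i j) := by
    refine ⟨(0, 1), ?_⟩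
    simp only [phiMap, wMap, LinearMap.coe_mk, AddHom.coe_mk, Prod.mk.injEq]
    constructor
    · ring
    · rw [← hxx]; ring
  have hs1' : ∀ u v : RPoly, ∃ w ∈ Ideal.span {py ^ j, px ^ (d - i)},
      wMap (py ^ (d - j)) (px ^ i) w = phiMap d i j (u, v) := by
    intro u v
    refine ⟨py ^ j * u + px ^ (d - i) * v,
      Submodule.mem_span_pair.mpr ⟨u, v, by simp only [smul_eq_mul]; ring⟩, ?_⟩
    simp only [phiMap, wMap, LinearMap.coe_mk, AddHom.coe_mk, Prod.mk.injEq]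
    constructor
    · rw [← hyy]; ring
    · rw [← hxx]; ring
  exact ⟨hc1, hc2,
    cliffordQuotAux (psiMap d i j) _ _ _ _ _ (pow_ne_zero _ px_ne_zero) hkphi hg1 hg2 hs1,
    cliffordQuotAux (phiMap d i j) _ _ _ _ _ (pow_ne_zero _ py_ne_zero) hkpsi hg1' hg2' hs1',
    (quot_fin i (d - j)).1, (quot_fin i (d - j)).2,
    (quot_fin' j (d - i)).1, (quot_fin' j (d - i)).2⟩
end
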